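/- Let n ≥ 1 and let e₁, …, eₙ be integers with |f(e₁, …, eₙ)| ≤ 1. Then one of the following eleven cases holds: (i) n = 1 and e₁ = 0; (ii) n = 1 and |e₁| = 1; (iii) n ≥ 2 and e₁ = 0; (iv) n ≥ 2 and eₙ = 0; (v) there is i with 1 < i < n, eᵢ = 0, and e_{i−1} · e_{i+1} ≤ 0; (vi) n ≥ 2, e₁ = 1, e₂ ≥ 0, and e₂ ≠ 4; (vii) n ≥ 2, eₙ = 1, e_{n−1} ≥ 0, and e_{n−1} ≠ 4; (viii) n ≥ 2, e₁ = −1, e₂ ≤ 0, and e₂ ≠ −4; (ix) n ≥ 2, eₙ = −1, e_{n−1} ≤ 0, and e_{n−1} ≠ −4; (x) there is i with 1 < i < n, eᵢ = 1, e_{i−1} ≥ 0, e_{i+1} ≥ 0, and not (e_{i−1} = 4 and e_{i+1} = 4); (xi) there is i with 1 < i < n, eᵢ = −1, e_{i−1} ≤ 0, e_{i+1} ≤ 0, and not (e_{i−1} = −4 and e_{i+1} = −4). -/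

import Mathlib

/-- `plumbDet n e` is the determinant `f(e_1, ..., e_n)` of the `n x n` tridiagonal matrix whose
diagonal entries are `e 1, ..., e n` (the tuple is indexed starting from `1`) and whose sub- and
super-diagonal entries all equal `1`.  By convention `plumbDet 0 e = 1` and
`plumbDet 1 e = e 1`. -/
def plumbDet (n : ℕ) (e : ℕ → ℤ) : ℤ :=
  Matrix.det (Matrix.of fun i j : Fin n =>
    if (i : ℕ) = (j : ℕ) then e ((i : ℕ) + 1)
    else if (i : ℕ) + 1 = (j : ℕ) ∨ (j : ℕ) + 1 = (i : ℕ) then 1 else 0)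


lemma plumb_abs_add_of_mul_nonneg {x y : ℤ} (h : 0 ≤ x * y) : |x + y| = |x| + |y| := by
  rcases le_or_gt 0 x with hx | hx <;> rcases le_or_gt 0 y with hy | hy
  · rw [abs_of_nonneg hx, abs_of_nonneg hy, abs_of_nonneg (by linarith)]
  · have hx0 : x = 0 := by nlinarith
    subst hx0; simp
  · have hy0 : y = 0 := by nlinarith
    subst hy0; simp
  · rw [abs_of_neg hx, abs_of_neg hy, abs_of_neg (by linarith)]; ring

def PlumbSt (a p q : ℤ) : Prop :=
  1 ≤ |q| ∧ |q| < |p| ∧ 0 < a * p * q ∧ ((a = 4 ∨ a = -4) → 2 * |q| + 1 ≤ |p|)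

namespace PlumbSt

lemma st_end {a p q : ℤ} (h : PlumbSt a p q) : 2 ≤ |p| := by
  obtain ⟨h1, h2, -, -⟩ := h; omega

lemma st_big {a p q b : ℤ} (h : PlumbSt a p q) (hb : 2 ≤ |b|) :
    PlumbSt b (b * p - q) p := by
  obtain ⟨h1, h2, h3, h4⟩ := h
  have habs : |b| * |p| - |q| ≤ |b * p - q| := by
    have := abs_sub_abs_le_abs_sub (b * p) q
    rw [abs_mul] at this; linarith
  refine ⟨by omega, by nlinarith [abs_nonneg p], ?_, ?_⟩
  · have h5 : |b * p * q| = |b| * |p| * |q| := by rw [abs_mul, abs_mul]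
    have h6 : b * p * q ≤ |b * p * q| := le_abs_self _
    have h7 : -|b * p * q| ≤ b * p * q := neg_abs_le _
    have h8 : b * (b * p - q) * p = (b * p) * (b * p) - b * p * q := by ring
    have h9 : |b * p| * |b * p| = (b * p) * (b * p) := abs_mul_abs_self _
    have h10 : |b * p| = |b| * |p| := abs_mul _ _
    have h11 : (|b| * |p|) * (|b| * |p|) = (b * p) * (b * p) := by rw [← h10]; exact h9
    have h12 : (|b| * |p|) * (|b| * |p| - |q|) = (|b| * |p|) * (|b| * |p|) - |b| * |p| * |q| := by
      ring
    have h13 : 0 < |b| * |p| - |q| := by nlinarith [abs_nonneg p]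
    have h14 : 0 < (|b| * |p|) * (|b| * |p| - |q|) :=
      mul_pos (by nlinarith [abs_nonneg p, abs_nonneg q]) h13
    nlinarith [abs_nonneg p, abs_nonneg q, abs_nonneg b]
  · intro hb4
    have hb' : |b| = 4 := by rcases hb4 with h | h <;> rw [h] <;> norm_num
    rw [hb'] at habs
    omega

lemma st_zero {a p q c : ℤ} (h : PlumbSt a p q) (hc : 0 < a * c) :
    PlumbSt c (c * (-q) - p) (-q) := by
  obtain ⟨h1, h2, h3, h4⟩ := h
  have key : 0 < (c * q) * p := by nlinarith [sq_nonneg (a*p), sq_nonneg (a*q), sq_nonneg a]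
  have heq : |c * (-q) - p| = |c| * |q| + |p| := by
    have h0 : c * (-q) - p = (-(c * q)) + (-p) := by ring
    rw [h0, plumb_abs_add_of_mul_nonneg (by nlinarith), abs_neg, abs_neg, abs_mul]
  have hcabs : 1 ≤ |c| := by
    have h0 : c ≠ 0 := by intro h0; rw [h0] at hc; simp at hc
    have := abs_pos.mpr h0
    omega
  have hpn := abs_nonneg p
  refine ⟨by rw [abs_neg]; omega, ?_, ?_, ?_⟩
  · rw [abs_neg, heq]; nlinarith [abs_nonneg q]
  · have hx : c * (c * (-q) - p) * (-q) = (c*q)*(c*q) + (c*q)*p := by ring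
    rw [hx]; nlinarith [sq_nonneg (c*q)]
  · intro hc4
    have hc' : |c| = 4 := by rcases hc4 with h | h <;> rw [h] <;> norm_num
    rw [abs_neg, heq, hc']
    omega

lemma st_one_neg {a p q : ℤ} (h : PlumbSt a p q) (ha : a < 0) : PlumbSt 1 (p - q) p := by
  obtain ⟨h1, h2, h3, h4⟩ := h
  have hpq : 0 < p * (-q) := by nlinarith
  have heq : |p - q| = |p| + |q| := by
    have h0 : p - q = p + (-q) := by ring
    rw [h0, plumb_abs_add_of_mul_nonneg (by nlinarith), abs_neg]
  refine ⟨by omega, by omega, ?_, by rintro (h | h) <;> omega⟩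
  have hx : 1 * (p - q) * p = p * p + p * (-q) := by ring
  rw [hx]; nlinarith [sq_nonneg p, abs_nonneg q, abs_pos.mpr (show p ≠ 0 by intro h0; rw [h0] at h2; simp at h2; omega)]

lemma st_mone_pos {a p q : ℤ} (h : PlumbSt a p q) (ha : 0 < a) : PlumbSt (-1) (-p - q) p := by
  obtain ⟨h1, h2, h3, h4⟩ := h
  have hpq : 0 < p * q := by nlinarith
  have heq : |-p - q| = |p| + |q| := by
    have h0 : -p - q = (-p) + (-q) := by ring
    rw [h0, plumb_abs_add_of_mul_nonneg (by nlinarith), abs_neg, abs_neg]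
  refine ⟨by omega, by omega, ?_, by rintro (h | h) <;> omega⟩
  have hx : (-1) * (-p - q) * p = p * p + p * q := by ring
  rw [hx]; nlinarith [sq_nonneg p]

lemma st_one_two {a p q c : ℤ} (h : PlumbSt a p q) (ha : 0 < a) (hc : c < 0) :
    PlumbSt c (c * (p - q) - p) (p - q) := by
  obtain ⟨h1, h2, h3, h4⟩ := h
  have hpq : 0 < p * q := by nlinarith
  have hq1 : |p - q| = |p| - |q| := by
    rcases lt_trichotomy p 0 with hp | hp | hp
    · have hq : q < 0 := by nlinarith
      rw [abs_of_neg hp, abs_of_neg hq, abs_of_neg (show p - q < 0 by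
          rw [abs_of_neg hp, abs_of_neg hq] at h2; omega)]
      ring
    · exfalso; rw [hp] at hpq; simp at hpq
    · have hq : 0 < q := by nlinarith
      rw [abs_of_pos hp, abs_of_pos hq, abs_of_pos (show 0 < p - q by
          rw [abs_of_pos hp, abs_of_pos hq] at h2; omega)]
  have hkey : 0 < (p - q) * p := by
    have : 1 ≤ |p - q| := by omega
    rcases lt_trichotomy p 0 with hp | hp | hp
    · have hq : q < 0 := by nlinarith
      have : p - q < 0 := by rw [abs_of_neg hp, abs_of_neg hq] at h2; omega
      nlinarith
    · exfalso; rw [hp] at hpq; simp at hpq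
    · have hq : 0 < q := by nlinarith
      have : 0 < p - q := by rw [abs_of_pos hp, abs_of_pos hq] at h2; omega
      nlinarith
  have heq : |c * (p - q) - p| = |c| * |p - q| + |p| := by
    have h0 : c * (p - q) - p = (c * (p - q)) + (-p) := by ring
    rw [h0, plumb_abs_add_of_mul_nonneg (by nlinarith), abs_mul, abs_neg]
  have hcabs : 1 ≤ |c| := by have := abs_pos.mpr (show c ≠ 0 by omega); omega
  have hq0 : 1 ≤ |p - q| := by omega
  refine ⟨hq0, ?_, ?_, ?_⟩
  · rw [heq]; nlinarith [abs_nonneg p]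
  · have hx : c * (c * (p - q) - p) * (p - q) = (c * (p-q)) * (c * (p-q)) + (-c) * ((p - q) * p) := by ring
    rw [hx]
    nlinarith [sq_nonneg (c * (p - q)), mul_pos (show (0:ℤ) < -c by omega) hkey]
  · intro hc4
    have hc' : |c| = 4 := by rcases hc4 with h | h <;> rw [h] <;> norm_num
    rw [heq, hc']
    have := abs_nonneg p
    omega

lemma st_mone_two {a p q c : ℤ} (h : PlumbSt a p q) (ha : a < 0) (hc : 0 < c) :
    PlumbSt c (c * (-p - q) - p) (-p - q) := by
  obtain ⟨h1, h2, h3, h4⟩ := h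
  have hpq : 0 < p * (-q) := by nlinarith
  have hq1 : |-p - q| = |p| - |q| := by
    rcases lt_trichotomy p 0 with hp | hp | hp
    · have hq : 0 < q := by nlinarith
      rw [abs_of_neg hp, abs_of_pos hq, abs_of_pos (show 0 < -p - q by
          rw [abs_of_neg hp, abs_of_pos hq] at h2; omega)]
    · exfalso; rw [hp] at hpq; simp at hpq
    · have hq : q < 0 := by nlinarith
      rw [abs_of_pos hp, abs_of_neg hq, abs_of_neg (show -p - q < 0 by
          rw [abs_of_pos hp, abs_of_neg hq] at h2; omega)]
      ring
  have hkey : 0 < (-p - q) * (-p) := by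
    rcases lt_trichotomy p 0 with hp | hp | hp
    · have hq : 0 < q := by nlinarith
      have : 0 < -p - q := by rw [abs_of_neg hp, abs_of_pos hq] at h2; omega
      nlinarith
    · exfalso; rw [hp] at hpq; simp at hpq
    · have hq : q < 0 := by nlinarith
      have : -p - q < 0 := by rw [abs_of_pos hp, abs_of_neg hq] at h2; omega
      nlinarith
  have heq : |c * (-p - q) - p| = |c| * |-p - q| + |p| := by
    have h0 : c * (-p - q) - p = (c * (-p - q)) + (-p) := by ring
    rw [h0, plumb_abs_add_of_mul_nonneg (by nlinarith), abs_mul, abs_neg]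
  have hcabs : 1 ≤ |c| := by have := abs_pos.mpr (show c ≠ 0 by omega); omega
  have hq0 : 1 ≤ |-p - q| := by omega
  refine ⟨hq0, ?_, ?_, ?_⟩
  · rw [heq]; nlinarith [abs_nonneg p]
  · have hx : c * (c * (-p - q) - p) * (-p - q) = (c * (-p-q)) * (c * (-p-q)) + c * ((-p - q) * (-p)) := by ring
    rw [hx]
    nlinarith [sq_nonneg (c * (-p - q)), mul_pos hc hkey]
  · intro hc4
    have hc' : |c| = 4 := by rcases hc4 with h | h <;> rw [h] <;> norm_num
    rw [heq, hc']
    have := abs_nonneg p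
    omega

lemma st_one_44 {p q : ℤ} (h : PlumbSt 4 p q) : PlumbSt 4 (4 * (p - q) - p) (p - q) := by
  obtain ⟨h1, h2, h3, h4⟩ := h
  have h44 := h4 (Or.inl rfl)
  rcases lt_trichotomy p 0 with hp | hp | hp
  · have hq : q < 0 := by nlinarith
    rw [abs_of_neg hp, abs_of_neg hq] at *
    refine ⟨?_, ?_, ?_, ?_⟩
    · rw [abs_of_neg (show p - q < 0 by omega)]; omega
    · rw [abs_of_neg (show p - q < 0 by omega), abs_of_neg (show 4 * (p - q) - p < 0 by omega)]
      omega
    · nlinarith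
    · intro _
      rw [abs_of_neg (show p - q < 0 by omega), abs_of_neg (show 4 * (p - q) - p < 0 by omega)]
      omega
  · exfalso; rw [hp] at h3; simp at h3
  · have hq : 0 < q := by nlinarith
    rw [abs_of_pos hp, abs_of_pos hq] at *
    refine ⟨?_, ?_, ?_, ?_⟩
    · rw [abs_of_pos (show 0 < p - q by omega)]; omega
    · rw [abs_of_pos (show 0 < p - q by omega), abs_of_pos (show 0 < 4 * (p - q) - p by omega)]
      omega
    · nlinarith
    · intro _
      rw [abs_of_pos (show 0 < p - q by omega), abs_of_pos (show 0 < 4 * (p - q) - p by omega)]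
      omega

lemma st_mone_44 {p q : ℤ} (h : PlumbSt (-4) p q) :
    PlumbSt (-4) ((-4) * (-p - q) - p) (-p - q) := by
  obtain ⟨h1, h2, h3, h4⟩ := h
  have h44 := h4 (Or.inr rfl)
  rcases lt_trichotomy p 0 with hp | hp | hp
  · have hq : 0 < q := by nlinarith
    rw [abs_of_neg hp, abs_of_pos hq] at *
    refine ⟨?_, ?_, ?_, ?_⟩
    · rw [abs_of_pos (show 0 < -p - q by omega)]; omega
    · rw [abs_of_pos (show 0 < -p - q by omega), abs_of_neg (show (-4) * (-p - q) - p < 0 by omega)]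
      omega
    · nlinarith
    · intro _
      rw [abs_of_pos (show 0 < -p - q by omega), abs_of_neg (show (-4) * (-p - q) - p < 0 by omega)]
      omega
  · exfalso; rw [hp] at h3; simp at h3
  · have hq : q < 0 := by nlinarith
    rw [abs_of_pos hp, abs_of_neg hq] at *
    refine ⟨?_, ?_, ?_, ?_⟩
    · rw [abs_of_neg (show -p - q < 0 by omega)]; omega
    · rw [abs_of_neg (show -p - q < 0 by omega), abs_of_pos (show 0 < (-4) * (-p - q) - p by omega)]
      omega
    · nlinarith
    · intro _
      rw [abs_of_neg (show -p - q < 0 by omega), abs_of_pos (show 0 < (-4) * (-p - q) - p by omega)]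
      omega

lemma st_end_one_neg {a p q : ℤ} (h : PlumbSt a p q) (ha : a < 0) : 2 ≤ |p - q| := by
  exact st_end (st_one_neg h ha)

lemma st_end_mone_pos {a p q : ℤ} (h : PlumbSt a p q) (ha : 0 < a) : 2 ≤ |-p - q| := by
  exact st_end (st_mone_pos h ha)

lemma st_end_one_4 {p q : ℤ} (h : PlumbSt 4 p q) : 2 ≤ |p - q| := by
  obtain ⟨h1, h2, h3, h4⟩ := h
  have h44 := h4 (Or.inl rfl)
  rcases lt_trichotomy p 0 with hp | hp | hp
  · have hq : q < 0 := by nlinarith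
    rw [abs_of_neg hp, abs_of_neg hq] at *
    rw [abs_of_neg (show p - q < 0 by omega)]; omega
  · exfalso; rw [hp] at h3; simp at h3
  · have hq : 0 < q := by nlinarith
    rw [abs_of_pos hp, abs_of_pos hq] at *
    rw [abs_of_pos (show 0 < p - q by omega)]; omega

lemma st_end_mone_m4 {p q : ℤ} (h : PlumbSt (-4) p q) : 2 ≤ |-p - q| := by
  obtain ⟨h1, h2, h3, h4⟩ := h
  have h44 := h4 (Or.inr rfl)
  rcases lt_trichotomy p 0 with hp | hp | hp
  · have hq : 0 < q := by nlinarith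
    rw [abs_of_neg hp, abs_of_pos hq] at *
    rw [abs_of_pos (show 0 < -p - q by omega)]; omega
  · exfalso; rw [hp] at h3; simp at h3
  · have hq : q < 0 := by nlinarith
    rw [abs_of_pos hp, abs_of_neg hq] at *
    rw [abs_of_neg (show -p - q < 0 by omega)]; omega

lemma st_base_big {c : ℤ} (h : 2 ≤ |c|) : PlumbSt c c 1 := by
  refine ⟨by norm_num, by rw [abs_one]; omega, ?_, ?_⟩
  · have : c * c * 1 = c * c := by ring
    rw [this]
    have hc0 : c ≠ 0 := by intro h0; rw [h0] at h; simp at h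
    rcases hc0.lt_or_gt with h' | h'
    · exact mul_pos_of_neg_of_neg h' h'
    · exact mul_pos h' h'
  · intro h4
    rcases h4 with h' | h' <;> rw [h'] <;> norm_num

lemma st_base_pos {c : ℤ} (h : c < 0 ∨ c = 4) : PlumbSt c (c - 1) 1 := by
  rcases h with h | h
  · refine ⟨by norm_num, ?_, ?_, ?_⟩
    · rw [abs_one, abs_of_neg (by omega : c - 1 < 0)]; omega
    · have hx : c * (c - 1) * 1 = c * (c - 1) := by ring
      rw [hx]
      exact mul_pos_of_neg_of_neg h (by omega)
    · rintro (h4 | h4)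
      · omega
      · rw [abs_one, h4]
        norm_num
  · subst h
    exact ⟨by norm_num, by norm_num, by norm_num, fun _ => by norm_num⟩

lemma st_base_neg {c : ℤ} (h : 0 < c ∨ c = -4) : PlumbSt c (-c - 1) (-1) := by
  rcases h with h | h
  · refine ⟨by norm_num, ?_, ?_, ?_⟩
    · rw [show |(-1 : ℤ)| = 1 by norm_num, abs_of_neg (by omega : -c - 1 < 0)]; omega
    · have hx : c * (-c - 1) * (-1) = c * (c + 1) := by ring
      rw [hx]; exact mul_pos h (by omega)
    · rintro (h4 | h4)
      · subst h4; norm_num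
      · omega
  · subst h
    exact ⟨by norm_num, by norm_num, by norm_num, fun _ => by norm_num⟩

end PlumbSt


def plumbF (e : ℕ → ℤ) : ℕ → ℤ
  | 0 => 1
  | 1 => e 1
  | (k+2) => e (k+2) * plumbF e (k+1) - plumbF e k

lemma plumbF_rec2 (e : ℕ → ℤ) (k : ℕ) :
    plumbF e (k+2) = e (k+2) * plumbF e (k+1) - plumbF e k := by
  rfl

lemma plumbF_rec3 (e : ℕ → ℤ) (k : ℕ) :
    plumbF e (k+3) = e (k+3) * plumbF e (k+2) - plumbF e (k+1) :=
  plumbF_rec2 e (k+1)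

lemma plumbF_rec1 (e : ℕ → ℤ) (k : ℕ) (hk : 1 ≤ k) :
    plumbF e (k+1) = e (k+1) * plumbF e k - plumbF e (k-1) := by
  obtain ⟨j, rfl⟩ : ∃ j, k = j + 1 := ⟨k - 1, by omega⟩
  exact plumbF_rec2 e j




theorem plumbDet_zero (e : ℕ → ℤ) : plumbDet 0 e = 1 := by
  simp [plumbDet]

theorem plumbDet_one (e : ℕ → ℤ) : plumbDet 1 e = e 1 := by
  simp [plumbDet, Matrix.det_fin_one]

theorem plumbDet_front (n : ℕ) (e : ℕ → ℤ) :
    plumbDet (n+2) e = e 1 * plumbDet (n+1) (fun i => e (i+1))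
      - plumbDet n (fun i => e (i+2)) := by
  rw [plumbDet, Matrix.det_succ_row_zero]
  rw [Fin.sum_univ_succ, Fin.sum_univ_succ]
  have htail : ∀ i : Fin n,
      (-1 : ℤ) ^ (i.succ.succ : ℕ) *
        Matrix.of (fun i j : Fin (n+2) =>
          if (i : ℕ) = (j : ℕ) then e ((i : ℕ) + 1)
          else if (i : ℕ) + 1 = (j : ℕ) ∨ (j : ℕ) + 1 = (i : ℕ) then 1 else 0) 0 i.succ.succ *
        ((Matrix.of (fun i j : Fin (n+2) =>
          if (i : ℕ) = (j : ℕ) then e ((i : ℕ) + 1)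
          else if (i : ℕ) + 1 = (j : ℕ) ∨ (j : ℕ) + 1 = (i : ℕ) then 1 else 0)).submatrix
            Fin.succ i.succ.succ.succAbove).det = 0 := by
    intro i
    have h0 : (Matrix.of (fun i j : Fin (n+2) =>
          if (i : ℕ) = (j : ℕ) then e ((i : ℕ) + 1)
          else if (i : ℕ) + 1 = (j : ℕ) ∨ (j : ℕ) + 1 = (i : ℕ) then 1 else 0)) 0 i.succ.succ
        = 0 := by
      simp only [Matrix.of_apply, Fin.val_succ, Fin.val_zero]
      split_ifs <;> simp_all
    rw [h0]; ring
  rw [Finset.sum_congr rfl (fun i _ => htail i), Finset.sum_const_zero, add_zero]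
  have h1 : ((Matrix.of (fun i j : Fin (n+2) =>
          if (i : ℕ) = (j : ℕ) then e ((i : ℕ) + 1)
          else if (i : ℕ) + 1 = (j : ℕ) ∨ (j : ℕ) + 1 = (i : ℕ) then 1 else 0)).submatrix
            Fin.succ (Fin.succAbove 0)).det = plumbDet (n+1) (fun i => e (i+1)) := by
    rw [plumbDet]
    congr 1
    ext i j
    simp only [Matrix.submatrix_apply, Fin.zero_succAbove, Matrix.of_apply, Fin.val_succ]
    by_cases h : (i : ℕ) = (j : ℕ)
    · rw [if_pos (by omega), if_pos h]
    · rw [if_neg (by omega), if_neg h]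
      by_cases h2 : (i : ℕ) + 1 = (j : ℕ) ∨ (j : ℕ) + 1 = (i : ℕ)
      · rw [if_pos (by omega), if_pos h2]
      · rw [if_neg (by omega), if_neg h2]
  have h2 : ((Matrix.of (fun i j : Fin (n+2) =>
          if (i : ℕ) = (j : ℕ) then e ((i : ℕ) + 1)
          else if (i : ℕ) + 1 = (j : ℕ) ∨ (j : ℕ) + 1 = (i : ℕ) then 1 else 0)).submatrix
            Fin.succ (Fin.succ 0).succAbove).det = plumbDet n (fun i => e (i+2)) := by
    rw [Matrix.det_succ_column_zero, Fin.sum_univ_succ]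
    have htail2 : ∀ i : Fin n,
        (-1 : ℤ) ^ ((i.succ : ℕ)) *
          ((Matrix.of (fun i j : Fin (n+2) =>
            if (i : ℕ) = (j : ℕ) then e ((i : ℕ) + 1)
            else if (i : ℕ) + 1 = (j : ℕ) ∨ (j : ℕ) + 1 = (i : ℕ) then 1 else 0)).submatrix
              Fin.succ (Fin.succ 0).succAbove) i.succ 0 *
          ((((Matrix.of (fun i j : Fin (n+2) =>
            if (i : ℕ) = (j : ℕ) then e ((i : ℕ) + 1)
            else if (i : ℕ) + 1 = (j : ℕ) ∨ (j : ℕ) + 1 = (i : ℕ) then 1 else 0)).submatrix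
              Fin.succ (Fin.succ 0).succAbove).submatrix i.succ.succAbove Fin.succ)).det = 0 := by
      intro i
      have h0 : ((Matrix.of (fun i j : Fin (n+2) =>
            if (i : ℕ) = (j : ℕ) then e ((i : ℕ) + 1)
            else if (i : ℕ) + 1 = (j : ℕ) ∨ (j : ℕ) + 1 = (i : ℕ) then 1 else 0)).submatrix
              Fin.succ (Fin.succ 0).succAbove) i.succ 0 = 0 := by
        simp only [Matrix.submatrix_apply, Fin.succ_succAbove_zero, Matrix.of_apply,
          Fin.val_succ, Fin.val_zero]
        split_ifs <;> simp_all
      rw [h0]; ring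
    rw [Finset.sum_congr rfl (fun i _ => htail2 i), Finset.sum_const_zero, add_zero]
    have hs00 : ((Matrix.of (fun i j : Fin (n+2) =>
            if (i : ℕ) = (j : ℕ) then e ((i : ℕ) + 1)
            else if (i : ℕ) + 1 = (j : ℕ) ∨ (j : ℕ) + 1 = (i : ℕ) then 1 else 0)).submatrix
              Fin.succ (Fin.succ 0).succAbove) 0 0 = 1 := by
      simp only [Matrix.submatrix_apply, Fin.succ_succAbove_zero, Matrix.of_apply,
        Fin.val_succ, Fin.val_zero]
      norm_num
    rw [hs00, plumbDet]
    have : ((((Matrix.of (fun i j : Fin (n+2) =>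
            if (i : ℕ) = (j : ℕ) then e ((i : ℕ) + 1)
            else if (i : ℕ) + 1 = (j : ℕ) ∨ (j : ℕ) + 1 = (i : ℕ) then 1 else 0)).submatrix
              Fin.succ (Fin.succ 0).succAbove).submatrix (Fin.succAbove 0) Fin.succ)).det
        = (Matrix.of fun i j : Fin n =>
            if (i : ℕ) = (j : ℕ) then e ((i : ℕ) + 2 + 1)
            else if (i : ℕ) + 1 = (j : ℕ) ∨ (j : ℕ) + 1 = (i : ℕ) then 1 else 0).det := by
      congr 1
      ext i j
      simp only [Matrix.submatrix_apply, Fin.zero_succAbove, Fin.succ_succAbove_succ,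
        Matrix.of_apply, Fin.val_succ]
      by_cases h : (i : ℕ) = (j : ℕ)
      · rw [if_pos (by omega), if_pos h]
      · rw [if_neg (by omega), if_neg h]
        by_cases h2 : (i : ℕ) + 1 = (j : ℕ) ∨ (j : ℕ) + 1 = (i : ℕ)
        · rw [if_pos (by omega), if_pos h2]
        · rw [if_neg (by omega), if_neg h2]
    rw [this]
    simp
  rw [h1, h2]
  have e00 : (Matrix.of (fun i j : Fin (n+2) =>
          if (i : ℕ) = (j : ℕ) then e ((i : ℕ) + 1)
          else if (i : ℕ) + 1 = (j : ℕ) ∨ (j : ℕ) + 1 = (i : ℕ) then 1 else 0)) 0 0 = e 1 := by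
    simp
  have e01 : (Matrix.of (fun i j : Fin (n+2) =>
          if (i : ℕ) = (j : ℕ) then e ((i : ℕ) + 1)
          else if (i : ℕ) + 1 = (j : ℕ) ∨ (j : ℕ) + 1 = (i : ℕ) then 1 else 0)) 0 (Fin.succ 0)
        = 1 := by
    have : ((Fin.succ 0 : Fin (n+2)) : ℕ) = 1 := rfl
    simp [this]
  rw [e00, e01]
  simp
  ring

theorem plumbDet_rev (n : ℕ) (e : ℕ → ℤ) :
    plumbDet n (fun i => e (n + 1 - i)) = plumbDet n e := by
  rw [plumbDet, plumbDet,
    ← Matrix.det_submatrix_equiv_self (Fin.revPerm)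
      (Matrix.of fun i j : Fin n =>
        if (i : ℕ) = (j : ℕ) then e ((i : ℕ) + 1)
        else if (i : ℕ) + 1 = (j : ℕ) ∨ (j : ℕ) + 1 = (i : ℕ) then 1 else 0)]
  congr 1
  ext i j
  have hi := i.isLt
  have hj := j.isLt
  simp only [Matrix.submatrix_apply, Matrix.of_apply, Fin.revPerm_apply, Fin.val_rev]
  by_cases h : (i : ℕ) = (j : ℕ)
  · rw [if_pos h, if_pos (show n - ((i : ℕ) + 1) = n - ((j : ℕ) + 1) by omega)]
    congr 1
    omega
  · rw [if_neg h, if_neg (show ¬(n - ((i : ℕ) + 1) = n - ((j : ℕ) + 1)) by omega)]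
    by_cases h2 : (i : ℕ) + 1 = (j : ℕ) ∨ (j : ℕ) + 1 = (i : ℕ)
    · rcases h2 with h2 | h2
      · rw [if_pos (show (i : ℕ) + 1 = (j : ℕ) ∨ (j : ℕ) + 1 = (i : ℕ) from Or.inl h2),
          if_pos (show n - ((i : ℕ) + 1) + 1 = n - ((j : ℕ) + 1) ∨
            n - ((j : ℕ) + 1) + 1 = n - ((i : ℕ) + 1) from Or.inr (by omega))]
      · rw [if_pos (show (i : ℕ) + 1 = (j : ℕ) ∨ (j : ℕ) + 1 = (i : ℕ) from Or.inr h2),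
          if_pos (show n - ((i : ℕ) + 1) + 1 = n - ((j : ℕ) + 1) ∨
            n - ((j : ℕ) + 1) + 1 = n - ((i : ℕ) + 1) from Or.inl (by omega))]
    · rw [if_neg h2, if_neg (show ¬(n - ((i : ℕ) + 1) + 1 = n - ((j : ℕ) + 1) ∨
        n - ((j : ℕ) + 1) + 1 = n - ((i : ℕ) + 1)) by push_neg at h2 ⊢; omega)]

theorem plumbDet_back (n : ℕ) (e : ℕ → ℤ) :
    plumbDet (n+2) e = e (n+2) * plumbDet (n+1) e - plumbDet n e := by
  have h := plumbDet_front n (fun i => e (n + 2 + 1 - i))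
  rw [plumbDet_rev (n+2) e] at h
  have e1 : e (n + 2 + 1 - 1) = e (n + 2) := by congr 1
  have e2 : (plumbDet (n+1) fun i => e (n + 2 + 1 - (i + 1))) = plumbDet (n+1) e := by
    rw [← plumbDet_rev (n+1) e]
    congr 1
    funext i
    congr 1
    omega
  have e3 : (plumbDet n fun i => e (n + 2 + 1 - (i + 2))) = plumbDet n e := by
    rw [← plumbDet_rev n e]
    congr 1
    funext i
    congr 1
    omega
  rw [h, e1, e2, e3]

lemma plumbF_eq (e : ℕ → ℤ) : ∀ k, plumbDet k e = plumbF e k := by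
  intro k
  induction k using Nat.strong_induction_on with
  | _ k ih =>
    match k with
    | 0 => simpa [plumbF] using plumbDet_zero e
    | 1 => simpa [plumbF] using plumbDet_one e
    | (k+2) =>
      rw [plumbDet_back, ih (k+1) (by omega), ih k (by omega), plumbF_rec2]

lemma plumb_core (n : ℕ) (e : ℕ → ℤ)
    (Hen : e n ≠ 0)
    (H0 : ∀ i, 1 < i → i < n → e i = 0 → 0 < e (i-1) * e (i+1))
    (H1 : ∀ i, 1 < i → i < n → e i = 1 → 0 ≤ e (i-1) → 0 ≤ e (i+1) →
      e (i-1) = 4 ∧ e (i+1) = 4)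
    (H1' : ∀ i, 1 < i → i < n → e i = -1 → e (i-1) ≤ 0 → e (i+1) ≤ 0 →
      e (i-1) = -4 ∧ e (i+1) = -4)
    (HR1 : 2 ≤ n → e n = 1 → 0 ≤ e (n-1) → e (n-1) = 4)
    (HR1' : 2 ≤ n → e n = -1 → e (n-1) ≤ 0 → e (n-1) = -4) :
    ∀ m k, n - k = m → 1 ≤ k → k ≤ n →
      PlumbSt (e k) (plumbF e k) (plumbF e (k-1)) → 2 ≤ |plumbF e n| := by
  intro m
  induction m using Nat.strong_induction_on with
  | _ m ih =>
    intro k hm hk1 hkn hst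
    rcases eq_or_lt_of_le hkn with rfl | hlt
    · exact PlumbSt.st_end hst
    have hane : e k ≠ 0 := by
      intro h0
      rcases hst with ⟨-, -, h3, -⟩
      rw [h0] at h3; simp at h3
    have hrec1 : plumbF e (k+1) = e (k+1) * plumbF e k - plumbF e (k-1) :=
      plumbF_rec1 e k hk1
    by_cases hb0 : e (k+1) = 0
    · -- zero step
      have hk2n : k + 1 < n := by
        rcases eq_or_lt_of_le (show k + 1 ≤ n by omega) with h | h
        · exfalso; rw [h] at hb0; exact Hen hb0
        · exact h
      have hcond : 0 < e k * e (k+2) := H0 (k+1) (by omega) hk2n hb0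
      have hF1 : plumbF e (k+1) = -(plumbF e (k-1)) := by rw [hrec1, hb0]; ring
      apply ih (n - (k+2)) (by omega) (k+2) rfl (by omega) (by omega)
      show PlumbSt (e (k+2)) (plumbF e (k+2)) (plumbF e (k+1))
      rw [plumbF_rec2, hF1]
      exact PlumbSt.st_zero hst hcond
    · by_cases hb1 : e (k+1) = 1
      · by_cases hkn1 : k + 1 = n
        · -- final step with e n = 1
          have hen1 : e n = 1 := by rw [← hkn1]; exact hb1
          have hFn : plumbF e n = plumbF e k - plumbF e (k-1) := by
            rw [← hkn1, hrec1, hb1]; ring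
          have hHR := HR1 (by omega) hen1
          rw [show n - 1 = k by omega] at hHR
          rcases lt_or_ge (e k) 0 with ha | ha
          · rw [hFn]; exact PlumbSt.st_end_one_neg hst ha
          · have h4 : e k = 4 := hHR ha
            rw [hFn]; exact PlumbSt.st_end_one_4 (h4 ▸ hst)
        · -- interior 1
          have hk2n : k + 1 < n := by omega
          rcases lt_or_ge (e k) 0 with ha | ha
          · -- one step
            apply ih (n - (k+1)) (by omega) (k+1) rfl (by omega) (by omega)
            show PlumbSt (e (k+1)) (plumbF e (k+1)) (plumbF e k)
            rw [hrec1, hb1, one_mul]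
            exact PlumbSt.st_one_neg hst ha
          · have ha' : 0 < e k := lt_of_le_of_ne ha (Ne.symm hane)
            have hF1 : plumbF e (k+1) = plumbF e k - plumbF e (k-1) := by
              rw [hrec1, hb1]; ring
            rcases lt_or_ge (e (k+2)) 0 with hc | hc
            · -- two-step
              apply ih (n - (k+2)) (by omega) (k+2) rfl (by omega) (by omega)
              show PlumbSt (e (k+2)) (plumbF e (k+2)) (plumbF e (k+1))
              rw [plumbF_rec2, hF1]
              exact PlumbSt.st_one_two hst ha' hc
            · -- 4,1,4
              have h44 := H1 (k+1) (by omega) hk2n hb1 (by exact ha) (by exact hc)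
              obtain ⟨h4a, h4c⟩ := h44
              apply ih (n - (k+2)) (by omega) (k+2) rfl (by omega) (by omega)
              show PlumbSt (e (k+2)) (plumbF e (k+2)) (plumbF e (k+1))
              rw [plumbF_rec2, hF1, h4c]
              exact PlumbSt.st_one_44 (h4a ▸ hst)
      · by_cases hbm1 : e (k+1) = -1
        · by_cases hkn1 : k + 1 = n
          · have hen1 : e n = -1 := by rw [← hkn1]; exact hbm1
            have hFn : plumbF e n = -(plumbF e k) - plumbF e (k-1) := by
              rw [← hkn1, hrec1, hbm1]; ring
            have hHR := HR1' (by omega) hen1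
            rw [show n - 1 = k by omega] at hHR
            rcases lt_or_ge 0 (e k) with ha | ha
            · rw [hFn]; exact PlumbSt.st_end_mone_pos hst ha
            · have h4 : e k = -4 := hHR ha
              rw [hFn]; exact PlumbSt.st_end_mone_m4 (h4 ▸ hst)
          · have hk2n : k + 1 < n := by omega
            rcases lt_or_ge 0 (e k) with ha | ha
            · apply ih (n - (k+1)) (by omega) (k+1) rfl (by omega) (by omega)
              show PlumbSt (e (k+1)) (plumbF e (k+1)) (plumbF e k)
              have hx : plumbF e (k+1) = -(plumbF e k) - plumbF e (k-1) := by
                rw [hrec1, hbm1]; ring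
              rw [hx, hbm1]
              exact PlumbSt.st_mone_pos hst ha
            · have ha' : e k < 0 := lt_of_le_of_ne ha hane
              have hF1 : plumbF e (k+1) = -(plumbF e k) - plumbF e (k-1) := by
                rw [hrec1, hbm1]; ring
              rcases lt_or_ge 0 (e (k+2)) with hc | hc
              · apply ih (n - (k+2)) (by omega) (k+2) rfl (by omega) (by omega)
                show PlumbSt (e (k+2)) (plumbF e (k+2)) (plumbF e (k+1))
                rw [plumbF_rec2, hF1]
                exact PlumbSt.st_mone_two hst ha' hc
              · have h44 := H1' (k+1) (by omega) hk2n hbm1 (by exact ha'.le) (by exact hc)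
                obtain ⟨h4a, h4c⟩ := h44
                apply ih (n - (k+2)) (by omega) (k+2) rfl (by omega) (by omega)
                show PlumbSt (e (k+2)) (plumbF e (k+2)) (plumbF e (k+1))
                rw [plumbF_rec2, hF1, h4c]
                exact PlumbSt.st_mone_44 (h4a ▸ hst)
        · -- |e (k+1)| ≥ 2
          have hb : 2 ≤ |e (k+1)| := by
            rcases le_or_gt 0 (e (k+1)) with h | h
            · rw [abs_of_nonneg h]; omega
            · rw [abs_of_neg h]; omega
          apply ih (n - (k+1)) (by omega) (k+1) rfl (by omega) (by omega)
          show PlumbSt (e (k+1)) (plumbF e (k+1)) (plumbF e k)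
          rw [hrec1]
          exact PlumbSt.st_big hst hb

/-- Let n ≥ 1 and let e_1, ..., e_n be integers with |f(e_1, ..., e_n)| ≤ 1.  Then one of
the eleven listed cases holds. -/
theorem plumbDet_eleven_cases (n : ℕ) (hn : 1 ≤ n) (e : ℕ → ℤ)
    (hf : |plumbDet n e| ≤ 1) :
    (n = 1 ∧ e 1 = 0) ∨
    (n = 1 ∧ |e 1| = 1) ∨
    (2 ≤ n ∧ e 1 = 0) ∨
    (2 ≤ n ∧ e n = 0) ∨
    (∃ i, 1 < i ∧ i < n ∧ e i = 0 ∧ e (i - 1) * e (i + 1) ≤ 0) ∨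
    (2 ≤ n ∧ e 1 = 1 ∧ 0 ≤ e 2 ∧ e 2 ≠ 4) ∨
    (2 ≤ n ∧ e n = 1 ∧ 0 ≤ e (n - 1) ∧ e (n - 1) ≠ 4) ∨
    (2 ≤ n ∧ e 1 = -1 ∧ e 2 ≤ 0 ∧ e 2 ≠ -4) ∨
    (2 ≤ n ∧ e n = -1 ∧ e (n - 1) ≤ 0 ∧ e (n - 1) ≠ -4) ∨
    (∃ i, 1 < i ∧ i < n ∧ e i = 1 ∧ 0 ≤ e (i - 1) ∧ 0 ≤ e (i + 1) ∧
      ¬(e (i - 1) = 4 ∧ e (i + 1) = 4)) ∨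
    (∃ i, 1 < i ∧ i < n ∧ e i = -1 ∧ e (i - 1) ≤ 0 ∧ e (i + 1) ≤ 0 ∧
      ¬(e (i - 1) = -4 ∧ e (i + 1) = -4)) := by
  by_contra hcon
  push_neg at hcon
  obtain ⟨hc1, hc2, hc3, hc4, hc5, hc6, hc7, hc8, hc9, hc10, hc11⟩ := hcon
  rcases eq_or_lt_of_le hn with h1 | hn2
  · have hne := hc1 h1.symm
    have hab := hc2 h1.symm
    rw [← h1, plumbDet_one] at hf
    have := abs_pos.mpr hne
    omega
  · have hn2 : 2 ≤ n := hn2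
    have hen : e n ≠ 0 := hc4 hn2
    have core := plumb_core n e hen hc5 hc10 hc11 hc7 hc9
    have key : 2 ≤ |plumbF e n| := by
      by_cases h1 : e 1 = 1
      · have hbase := hc6 hn2 h1
        have h2eq : plumbF e 2 = e 2 * e 1 - 1 := plumbF_rec2 e 0
        have hdisj : e 2 < 0 ∨ e 2 = 4 := by
          rcases lt_or_ge (e 2) 0 with h | h
          · exact Or.inl h
          · exact Or.inr (hbase h)
        apply core (n - 2) 2 rfl (by omega) hn2
        show PlumbSt (e 2) (plumbF e 2) (plumbF e 1)
        rw [h2eq, h1, mul_one, show plumbF e 1 = e 1 from rfl, h1]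
        exact PlumbSt.st_base_pos hdisj
      · by_cases hm1 : e 1 = -1
        · have hbase := hc8 hn2 hm1
          have h2eq : plumbF e 2 = e 2 * e 1 - 1 := plumbF_rec2 e 0
          have hdisj : 0 < e 2 ∨ e 2 = -4 := by
            rcases lt_or_ge 0 (e 2) with h | h
            · exact Or.inl h
            · exact Or.inr (hbase h)
          apply core (n - 2) 2 rfl (by omega) hn2
          show PlumbSt (e 2) (plumbF e 2) (plumbF e 1)
          have hx : plumbF e 2 = -(e 2) - 1 := by rw [h2eq, hm1]; ring
          rw [hx, show plumbF e 1 = e 1 from rfl, hm1]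
          exact PlumbSt.st_base_neg hdisj
        · have h0 : e 1 ≠ 0 := hc3 hn2
          have hb : 2 ≤ |e 1| := by
            rcases le_or_gt 0 (e 1) with h | h
            · rw [abs_of_nonneg h]; omega
            · rw [abs_of_neg h]; omega
          apply core (n - 1) 1 rfl le_rfl (by omega)
          show PlumbSt (e 1) (plumbF e 1) (plumbF e 0)
          rw [show plumbF e 1 = e 1 from rfl, show plumbF e 0 = 1 from rfl]
          exact PlumbSt.st_base_big hb
    rw [plumbF_eq e n] at hf
    omega
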